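/- For ε ∈ (0,1) and n ≥ 1, the quantity g_n(1−ε, 1) = (1 − (1−ε)ⁿ) log(nε/(1 − (1−ε)ⁿ)) − (n−1)(1−ε)ⁿ log(1−ε) − ((n−1)/n)(1 − (1−ε)ⁿ) satisfies g_n(1−ε, 1) ≥ (1 − e^{−nε}) log(nε) − 1. -/
import Mathlib


open Real

theorem stmt_14 (n : ℕ) (hn : 1 ≤ n) (ε : ℝ) (hε0 : 0 < ε) (hε1 : ε < 1) :
    (1 - (1 - ε) ^ n) * Real.log ((n : ℝ) * ε / (1 - (1 - ε) ^ n)) -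
        ((n : ℝ) - 1) * (1 - ε) ^ n * Real.log (1 - ε) -
        (((n : ℝ) - 1) / n) * (1 - (1 - ε) ^ n) ≥
      (1 - Real.exp (-(n : ℝ) * ε)) * Real.log ((n : ℝ) * ε) - 1 := by
  have hn1 : (1:ℝ) ≤ n := by exact_mod_cast hn
  have hnpos : (0:ℝ) < n := by linarith
  set b : ℝ := (1 - ε) ^ n with hb
  have hb0 : 0 < b := pow_pos (by linarith) n
  have hb1 : b < 1 := pow_lt_one₀ (by linarith) (by linarith) (by omega)
  have hA0 : 0 < 1 - b := by linarith
  have hbe : b ≤ Real.exp (-(n:ℝ) * ε) := by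
    have h1 : 1 - ε ≤ Real.exp (-ε) := by
      have := Real.add_one_le_exp (-ε); linarith
    calc b ≤ (Real.exp (-ε)) ^ n := pow_le_pow_left₀ (by linarith) h1 n
      _ = Real.exp (-(n:ℝ) * ε) := by rw [← Real.exp_nat_mul]; ring_nf
  have hBern : 1 - (n:ℝ) * ε ≤ b := by
    have h := one_add_mul_le_pow (a := -ε) (by linarith) n
    have : 1 + (n:ℝ) * (-ε) ≤ (1 + -ε) ^ n := h
    calc 1 - (n:ℝ) * ε = 1 + (n:ℝ) * (-ε) := by ring
      _ ≤ (1 + -ε) ^ n := this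
      _ = b := by rw [hb]; ring_nf
  have hlog1 : Real.log (1 - ε) ≤ 0 := Real.log_nonpos (by linarith) (by linarith)
  have hT2 : 0 ≤ -(((n:ℝ) - 1) * b * Real.log (1 - ε)) := by
    nlinarith [mul_nonneg (mul_nonneg (by linarith : (0:ℝ) ≤ (n:ℝ)-1) hb0.le) (neg_nonneg.mpr hlog1)]
  have hT3 : (((n:ℝ) - 1) / n) * (1 - b) ≤ 1 := by
    have h1 : ((n:ℝ)-1)/n ≤ 1 := by rw [div_le_one hnpos]; linarith
    have h2 : 0 ≤ ((n:ℝ)-1)/n := div_nonneg (by linarith) hnpos.le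
    nlinarith
  have hexp : Real.exp (-(n:ℝ)*ε) < 1 := by
    rw [Real.exp_lt_one_iff]; nlinarith
  by_cases hcase : 1 ≤ (n:ℝ) * ε
  · have hlogn : 0 ≤ Real.log ((n:ℝ) * ε) := Real.log_nonneg hcase
    have hsplit : Real.log ((n:ℝ) * ε / (1 - b)) =
        Real.log ((n:ℝ)*ε) - Real.log (1-b) :=
      Real.log_div (by positivity) (by linarith)
    have hlogA : Real.log (1 - b) ≤ 0 := Real.log_nonpos (by linarith) (by linarith)
    have key : (1 - Real.exp (-(n:ℝ)*ε)) * Real.log ((n:ℝ)*ε) ≤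
        (1 - b) * Real.log ((n:ℝ)*ε) := by nlinarith
    rw [hsplit]
    nlinarith [mul_nonneg hA0.le (neg_nonneg.mpr hlogA)]
  · push_neg at hcase
    have hlogn : Real.log ((n:ℝ)*ε) ≤ 0 := Real.log_nonpos (by positivity) hcase.le
    have hT1 : 0 ≤ Real.log ((n:ℝ)*ε / (1 - b)) :=
      Real.log_nonneg (by rw [le_div_iff₀ hA0]; linarith)
    have hRHS : (1 - Real.exp (-(n:ℝ)*ε)) * Real.log ((n:ℝ)*ε) ≤ 0 :=
      mul_nonpos_of_nonneg_of_nonpos (by linarith) hlogn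
    nlinarith [mul_nonneg hA0.le hT1]
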